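/- For the Grothendieck stratification of holomorphic structures on a trivial rank-r bundle over ℂP¹: if integers k₁ ≥ k₂ ≥ … ≥ k_r with k₁ + ⋯ + k_r = 0 include some k_i with |k_i| ≥ 2, then the codimension index 2·Σ_{(i,j): k_i > k_j} (k_i − k_j − 1) is strictly greater than r. -/

import Mathlib

/-!
Grothendieck stratification over ℂP¹: if integers k₁ ≥ k₂ ≥ … ≥ k_r with Σ k_i = 0 include
some k_i with |k_i| ≥ 2, then 2·Σ_{(i,j) : k_i > k_j} (k_i − k_j − 1) > r.
-/

private lemma cp1_aux_sum (r : ℕ) (f : Fin r → ℤ) (hsum : ∑ i, f i = 0)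
    (i₀ : Fin r) (h2 : 2 ≤ f i₀) (hmax : ∀ j, f j ≤ f i₀) :
    (r : ℤ) < ∑ j, (if f j < f i₀ then f i₀ - f j - 1 else 0) := by
  have hr : 0 < r := i₀.pos
  have hterm : ∀ j : Fin r, (if f j < f i₀ then f i₀ - f j - 1 else 0)
      = f i₀ - f j - (if f j < f i₀ then (1:ℤ) else 0) := by
    intro j
    by_cases h : f j < f i₀
    · simp [h]
    · have : f j = f i₀ := le_antisymm (hmax j) (not_lt.1 h)
      simp [h, this]
  rw [Finset.sum_congr rfl (fun j _ => hterm j), Finset.sum_sub_distrib,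
    Finset.sum_sub_distrib, hsum, Finset.sum_boole, Finset.sum_const,
    Finset.card_univ, Fintype.card_fin]
  have hN : (Finset.univ.filter fun j : Fin r => f j < f i₀).card ≤ r - 1 := by
    have hsub : (Finset.univ.filter fun j : Fin r => f j < f i₀) ⊆
        Finset.univ.erase i₀ := by
      intro j hj
      rw [Finset.mem_filter] at hj
      refine Finset.mem_erase.2 ⟨?_, Finset.mem_univ j⟩
      rintro rfl
      exact lt_irrefl _ hj.2
    calc (Finset.univ.filter fun j : Fin r => f j < f i₀).card
        ≤ (Finset.univ.erase i₀).card := Finset.card_le_card hsub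
      _ = r - 1 := by rw [Finset.card_erase_of_mem (Finset.mem_univ i₀),
          Finset.card_univ, Fintype.card_fin]
  have hN' : ((Finset.univ.filter fun j : Fin r => f j < f i₀).card : ℤ) ≤ (r : ℤ) - 1 := by
    have := Nat.cast_le (α := ℤ) |>.2 hN
    have hr1 : (1 : ℤ) ≤ (r : ℤ) := by exact_mod_cast hr
    omega
  have hmul : (2 : ℤ) * r ≤ (r : ℤ) * f i₀ := by
    have hrnn : (0 : ℤ) ≤ (r : ℤ) := Nat.cast_nonneg r
    nlinarith
  rw [nsmul_eq_mul]
  linarith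

theorem cp1_stratum_codimension_bound
    (r : ℕ) (k : Fin r → ℤ)
    (hmono : ∀ i j : Fin r, i ≤ j → k j ≤ k i)
    (hsum : ∑ i : Fin r, k i = 0)
    (hbig : ∃ i : Fin r, 2 ≤ |k i|) :
    (r : ℤ) < 2 * ∑ p ∈ Finset.univ.filter (fun p : Fin r × Fin r => k p.2 < k p.1),
        (k p.1 - k p.2 - 1) := by
  obtain ⟨i₀, hbig⟩ := hbig
  have hr : 0 < r := i₀.pos
  have hT : ∑ p ∈ Finset.univ.filter (fun p : Fin r × Fin r => k p.2 < k p.1),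
      (k p.1 - k p.2 - 1)
      = ∑ i : Fin r, ∑ j : Fin r, (if k j < k i then k i - k j - 1 else 0) := by
    rw [Finset.sum_filter, Fintype.sum_prod_type]
  have hnn : ∀ i j : Fin r, (0:ℤ) ≤ (if k j < k i then k i - k j - 1 else 0) := by
    intro i j
    split
    · omega
    · exact le_refl 0
  have hinn : ∀ i : Fin r, (0:ℤ) ≤ ∑ j : Fin r, (if k j < k i then k i - k j - 1 else 0) :=
    fun i => Finset.sum_nonneg fun j _ => hnn i j
  have hTnn : (0:ℤ) ≤ ∑ p ∈ Finset.univ.filter (fun p : Fin r × Fin r => k p.2 < k p.1),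
      (k p.1 - k p.2 - 1) := by
    rw [hT]; exact Finset.sum_nonneg fun i _ => hinn i
  rcases abs_cases (k i₀) with ⟨habs, _⟩ | ⟨habs, _⟩
  · -- k i₀ ≥ 2, so the top value k 0 ≥ 2
    set z : Fin r := ⟨0, hr⟩ with hz
    have hz2 : 2 ≤ k z := le_trans (habs ▸ hbig) (hmono z i₀ (by rw [Fin.le_def]; exact Nat.zero_le _))
    have h1 := cp1_aux_sum r k hsum z hz2 (fun j => hmono z j (by rw [Fin.le_def]; exact Nat.zero_le _))
    have h2 : ∑ j : Fin r, (if k j < k z then k z - k j - 1 else 0)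
        ≤ ∑ i : Fin r, ∑ j : Fin r, (if k j < k i then k i - k j - 1 else 0) :=
      Finset.single_le_sum (f := fun i => ∑ j : Fin r, (if k j < k i then k i - k j - 1 else 0))
        (fun i _ => hinn i) (Finset.mem_univ z)
    rw [hT]
    linarith [hT ▸ hTnn]
  · -- k i₀ ≤ -2, so the bottom value k (r-1) ≤ -2
    set l : Fin r := ⟨r - 1, by omega⟩ with hl
    have hil : i₀ ≤ l := by
      have := i₀.isLt
      simp only [Fin.le_def, hl]
      omega
    have hl2 : k l ≤ -2 := by
      have h := hmono i₀ l hil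
      omega
    have hf2 : 2 ≤ -k l := by omega
    have hfsum : ∑ i : Fin r, -k i = 0 := by
      rw [Finset.sum_neg_distrib, hsum, neg_zero]
    have h1 := cp1_aux_sum r (fun i => -k i) hfsum l hf2
      (fun j => neg_le_neg (hmono j l (by
        have := j.isLt
        simp only [Fin.le_def, hl]
        omega)))
    have h1' : (r : ℤ) < ∑ i : Fin r, (if k l < k i then k i - k l - 1 else 0) := by
      refine lt_of_lt_of_le h1 (le_of_eq (Finset.sum_congr rfl fun i _ => ?_))
      simp only [neg_lt_neg_iff]
      split
      · ring
      · rfl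
    have hT' : ∑ i : Fin r, ∑ j : Fin r, (if k j < k i then k i - k j - 1 else 0)
        = ∑ j : Fin r, ∑ i : Fin r, (if k j < k i then k i - k j - 1 else 0) :=
      Finset.sum_comm
    have h2 : ∑ i : Fin r, (if k l < k i then k i - k l - 1 else 0)
        ≤ ∑ j : Fin r, ∑ i : Fin r, (if k j < k i then k i - k j - 1 else 0) :=
      Finset.single_le_sum (f := fun j => ∑ i : Fin r, (if k j < k i then k i - k j - 1 else 0))
        (fun j _ => Finset.sum_nonneg fun i _ => hnn i j) (Finset.mem_univ l)
    rw [hT, hT']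
    linarith [hT ▸ hTnn]
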